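/- Let (q₁,q₂,q₃,q₄,q₅) = (1,1,1,-1,-3). For every A ∈ SU(5) there exists h ∈ Sp2 such that Σ_{ℓ=1}^5 (|(Ah)_{ℓ2}|² + |(Ah)_{ℓ4}|²) q_ℓ ≥ 0. -/

import Mathlib

open Finset

noncomputable section

/-- SU(5): 5×5 special unitary complex matrices. -/
def SU5 : Set (Matrix (Fin 5) (Fin 5) ℂ) :=
  {A | A * A.conjTranspose = 1 ∧ A.det = 1}

/-- The image of the embedding Sp(2) ↪ SU(5). -/
def Sp2 : Set (Matrix (Fin 5) (Fin 5) ℂ) :=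
  {h | h ∈ SU5 ∧
    (∀ i : Fin 5, h i 4 = if i = 4 then 1 else 0) ∧
    (∀ i : Fin 5, h 4 i = if i = 4 then 1 else 0) ∧
    (∀ i j : Fin 5, i < 2 → j < 2 →
      h (i + 2) (j + 2) = (starRingEnd ℂ) (h i j) ∧
      h (i + 2) j = -(starRingEnd ℂ) (h i (j + 2)))}

local notation "c" => starRingEnd ℂ

def NN (a0 a1 a2 a3 : ℂ) : ℝ :=
  Real.sqrt (Complex.normSq a0 + Complex.normSq a1 + Complex.normSq a2 + Complex.normSq a3)

def HH (A11 A21 B11 B21 A12 A22 B12 B22 : ℂ) : Matrix (Fin 5) (Fin 5) ℂ :=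
  !![A11, A12, -(c B11), -(c B12), 0;
     A21, A22, -(c B21), -(c B22), 0;
     B11, B12, c A11, c A12, 0;
     B21, B22, c A21, c A22, 0;
     0, 0, 0, 0, 1]

set_option maxHeartbeats 2000000 in
theorem HH_unitary (A11 A21 B11 B21 A12 A22 B12 B22 : ℂ)
    (h1 : c A11 * A11 + c A21 * A21 + c B11 * B11 + c B21 * B21 = 1)
    (h2 : c A12 * A12 + c A22 * A22 + c B12 * B12 + c B22 * B22 = 1)
    (h3 : c A11 * A12 + c A21 * A22 + c B11 * B12 + c B21 * B22 = 0)
    (h4 : c A11 * c B12 + c A21 * c B22 - c B11 * c A12 - c B21 * c A22 = 0) :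
    (HH A11 A21 B11 B21 A12 A22 B12 B22).conjTranspose
      * HH A11 A21 B11 B21 A12 A22 B12 B22 = 1 := by
  have h1' := congrArg (c ·) h1
  have h2' := congrArg (c ·) h2
  have h3' := congrArg (c ·) h3
  have h4' := congrArg (c ·) h4
  simp only [map_add, map_sub, map_mul, map_one, map_zero, Complex.conj_conj] at h1' h2' h3' h4'
  ext i j
  fin_cases i <;> fin_cases j <;>
    simp only [HH, Matrix.mul_apply, Fin.sum_univ_five, Matrix.conjTranspose_apply,
      Matrix.one_apply, RCLike.star_def,
      show ((⟨0, by omega⟩ : Fin 5)) = 0 from rfl, show ((⟨1, by omega⟩ : Fin 5)) = 1 from rfl,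
      show ((⟨2, by omega⟩ : Fin 5)) = 2 from rfl, show ((⟨3, by omega⟩ : Fin 5)) = 3 from rfl,
      show ((⟨4, by omega⟩ : Fin 5)) = 4 from rfl,
      Matrix.cons_val', Matrix.cons_val_zero, Matrix.cons_val_one,
      Matrix.head_cons, Matrix.empty_val', Matrix.cons_val_fin_one, Matrix.head_fin_const,
      Matrix.cons_val_two, Matrix.cons_val_three, Matrix.cons_val_four, Matrix.tail_cons,
      Matrix.of_apply, map_neg, Complex.conj_conj, Fin.mk_zero, Fin.mk_one]
  all_goals try norm_num [Fin.ext_iff, show ((0:Fin 5):ℕ)=0 from rfl, show ((1:Fin 5):ℕ)=1 from rfl,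
    show ((2:Fin 5):ℕ)=2 from rfl, show ((3:Fin 5):ℕ)=3 from rfl, show ((4:Fin 5):ℕ)=4 from rfl]
  all_goals (first
    | ring1
    | linear_combination h1
    | linear_combination h2
    | linear_combination h3
    | linear_combination h4
    | linear_combination -h4
    | linear_combination h1'
    | linear_combination h2'
    | linear_combination h3'
    | linear_combination h4'
    | linear_combination -h4')

set_option maxHeartbeats 2000000 in
theorem HH_det (A11 A21 B11 B21 A12 A22 B12 B22 : ℂ) :
    (HH A11 A21 B11 B21 A12 A22 B12 B22).det = A11 * A22 * (c A11) * (c A22) - (A11 * A22 * (c A12) * (c A21)) - (A11 * -(c B21) * B12 * (c A22)) + A11 * -(c B21) * (c A12) * B22 + A11 * -(c B22) * B12 * (c A21) - (A11 * -(c B22) * (c A11) * B22) - (A12 * A21 * (c A11) * (c A22)) + A12 * A21 * (c A12) * (c A21) + A12 * -(c B21) * B11 * (c A22) - (A12 * -(c B21) * (c A12) * B21) - (A12 * -(c B22) * B11 * (c A21)) + A12 * -(c B22) * (c A11) * B21 + -(c B11) * A21 * B12 * (c A22) - (-(c B11) * A21 * (c A12) * B22) - (-(c B11) * A22 * B11 *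 (c A22)) + -(c B11) * A22 * (c A12) * B21 + -(c B11) * -(c B22) * B11 * B22 - (-(c B11) * -(c B22) * B12 * B21) - (-(c B12) * A21 * B12 * (c A21)) + -(c B12) * A21 * (c A11) * B22 + -(c B12) * A22 * B11 * (c A21) - (-(c B12) * A22 * (c A11) * B21) - (-(c B12) * -(c B21) * B11 * B22) + -(c B12) * -(c B21) * B12 * B21 := by
  simp +decide [HH, Matrix.det_succ_row_zero, Fin.sum_univ_succ, Fin.succAbove]
  ring

set_option maxHeartbeats 1000000 in
theorem HH_mem (A11 A21 B11 B21 A12 A22 B12 B22 : ℂ)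
    (h1 : c A11 * A11 + c A21 * A21 + c B11 * B11 + c B21 * B21 = 1)
    (h2 : c A12 * A12 + c A22 * A22 + c B12 * B12 + c B22 * B22 = 1)
    (h3 : c A11 * A12 + c A21 * A22 + c B11 * B12 + c B21 * B22 = 0)
    (h4 : c A11 * c B12 + c A21 * c B22 - c B11 * c A12 - c B21 * c A22 = 0)
    (hdet : (HH A11 A21 B11 B21 A12 A22 B12 B22).det = 1) :
    HH A11 A21 B11 B21 A12 A22 B12 B22 ∈ Sp2 := by
  refine ⟨⟨mul_eq_one_comm.mp (HH_unitary _ _ _ _ _ _ _ _ h1 h2 h3 h4), hdet⟩, ?_, ?_, ?_⟩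
  · intro i; fin_cases i <;> rfl
  · intro i; fin_cases i <;> rfl
  · intro i j hi hj
    fin_cases i <;> fin_cases j <;>
      first
        | exact absurd hi (by decide)
        | exact absurd hj (by decide)
        | (constructor <;> simp [HH, show ((0:Fin 5)+2 : Fin 5) = 2 from rfl,
            show ((1:Fin 5)+2 : Fin 5) = 3 from rfl])

set_option maxHeartbeats 1000000 in
theorem key (A h : Matrix (Fin 5) (Fin 5) ℂ) (hA : A ∈ SU5) (hh : h ∈ Sp2)
    (hz1 : (A * h) 4 1 = 0) (hz3 : (A * h) 4 3 = 0) :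
    ∑ ℓ : Fin 5, (‖(A * h) ℓ 1‖ ^ 2 + ‖(A * h) ℓ 3‖ ^ 2) *
        (((![1, 1, 1, -1, -3] : Fin 5 → ℤ) ℓ : ℤ) : ℝ) ≥ 0 := by
  obtain ⟨hAu, _⟩ := hA
  obtain ⟨⟨hhu, _⟩, _⟩ := hh
  have hBu : (A * h) * (A * h).conjTranspose = 1 := by
    rw [Matrix.conjTranspose_mul, Matrix.mul_assoc, ← Matrix.mul_assoc h, hhu, Matrix.one_mul, hAu]
  have hBu' : (A * h).conjTranspose * (A * h) = 1 := mul_eq_one_comm.mp hBu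
  set B := A * h with hB
  have col : ∀ j : Fin 5, Complex.normSq (B 0 j) + Complex.normSq (B 1 j)
      + Complex.normSq (B 2 j) + Complex.normSq (B 3 j) + Complex.normSq (B 4 j) = 1 := by
    intro j
    have e := congrFun (congrFun hBu' j) j
    simp only [Matrix.mul_apply, Matrix.conjTranspose_apply, Matrix.one_apply, eq_self_iff_true, if_true,
      Fin.sum_univ_five, RCLike.star_def] at e
    have e2 : ((Complex.normSq (B 0 j) + Complex.normSq (B 1 j) + Complex.normSq (B 2 j)
        + Complex.normSq (B 3 j) + Complex.normSq (B 4 j) : ℝ) : ℂ) = 1 := by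
      push_cast
      rw [← Complex.mul_conj (B 0 j), ← Complex.mul_conj (B 1 j), ← Complex.mul_conj (B 2 j),
        ← Complex.mul_conj (B 3 j), ← Complex.mul_conj (B 4 j)]
      linear_combination e
    exact_mod_cast e2
  have row : Complex.normSq (B 3 0) + Complex.normSq (B 3 1) + Complex.normSq (B 3 2)
      + Complex.normSq (B 3 3) + Complex.normSq (B 3 4) = 1 := by
    have e := congrFun (congrFun hBu 3) 3
    simp only [Matrix.mul_apply, Matrix.conjTranspose_apply, Matrix.one_apply, eq_self_iff_true, if_true,
      Fin.sum_univ_five, RCLike.star_def] at e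
    have e2 : ((Complex.normSq (B 3 0) + Complex.normSq (B 3 1) + Complex.normSq (B 3 2)
        + Complex.normSq (B 3 3) + Complex.normSq (B 3 4) : ℝ) : ℂ) = 1 := by
      push_cast
      rw [← Complex.mul_conj (B 3 0), ← Complex.mul_conj (B 3 1), ← Complex.mul_conj (B 3 2),
        ← Complex.mul_conj (B 3 3), ← Complex.mul_conj (B 3 4)]
      linear_combination e
    exact_mod_cast e2
  have col1 := col 1
  have col3 := col 3
  rw [Fin.sum_univ_five]
  simp only [Matrix.cons_val_zero, Matrix.cons_val_one, Matrix.head_cons, Matrix.cons_val_two,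
    Matrix.cons_val_three, Matrix.cons_val_four, Matrix.tail_cons, Complex.sq_norm]
  rw [hz1, hz3] at *
  simp only [map_zero] at *
  push_cast
  nlinarith [Complex.normSq_nonneg (B 0 1), Complex.normSq_nonneg (B 1 1),
    Complex.normSq_nonneg (B 2 1), Complex.normSq_nonneg (B 3 1),
    Complex.normSq_nonneg (B 0 3), Complex.normSq_nonneg (B 1 3),
    Complex.normSq_nonneg (B 2 3), Complex.normSq_nonneg (B 3 3),
    Complex.normSq_nonneg (B 3 0), Complex.normSq_nonneg (B 3 2),
    Complex.normSq_nonneg (B 3 4), col1, col3, row]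

set_option maxHeartbeats 4000000 in
theorem exists_h (a0 a1 a2 a3 : ℂ) :
    ∃ h ∈ Sp2, a0 * h 0 1 + a1 * h 1 1 + a2 * h 2 1 + a3 * h 3 1 = 0 ∧
      a0 * h 0 3 + a1 * h 1 3 + a2 * h 2 3 + a3 * h 3 3 = 0 ∧ h 4 1 = 0 ∧ h 4 3 = 0 := by
  by_cases hP : a0 = 0 ∧ a2 = 0
  · obtain ⟨rfl, rfl⟩ := hP
    by_cases hQ : a1 = 0 ∧ a3 = 0
    · obtain ⟨rfl, rfl⟩ := hQ
      refine ⟨HH 1 0 0 0 0 1 0 0, HH_mem 1 0 0 0 0 1 0 0 (by norm_num) (by norm_num)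
        (by norm_num) (by norm_num) (by rw [HH_det]; norm_num), ?_, ?_, ?_, ?_⟩ <;>
        simp [HH, Matrix.vecHead, Matrix.vecTail]
    · have hS : (0:ℝ) < Complex.normSq 0 + Complex.normSq a1 + Complex.normSq 0
          + Complex.normSq a3 := by
        rcases not_and_or.mp hQ with h | h <;>
        · have h' := Complex.normSq_pos.mpr h
          have := Complex.normSq_nonneg (0:ℂ)
          have := Complex.normSq_nonneg a1
          have := Complex.normSq_nonneg a3
          linarith
      have hN2 : ((NN 0 a1 0 a3 : ℝ) : ℂ) * ((NN 0 a1 0 a3 : ℝ) : ℂ)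
          = 0 * c 0 + a1 * c a1 + 0 * c 0 + a3 * c a3 := by
        rw [← Complex.ofReal_mul]
        simp only [NN, Real.mul_self_sqrt hS.le, Complex.mul_conj]
        push_cast
        ring
      have hN0 : ((NN 0 a1 0 a3 : ℝ) : ℂ) ≠ 0 := by
        simp only [NN, ne_eq, Complex.ofReal_eq_zero]
        positivity
      have hn : (0 * c 0 + a1 * c a1 + 0 * c 0 + a3 * c a3) * ((↑(NN 0 a1 0 a3) : ℂ)⁻¹ * (↑(NN 0 a1 0 a3) : ℂ)⁻¹) = 1 := by
        rw [← hN2]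
        field_simp
      refine ⟨HH 0 (c a1 * (↑(NN 0 a1 0 a3) : ℂ)⁻¹) 0 (c a3 * (↑(NN 0 a1 0 a3) : ℂ)⁻¹) 1 0 0 0, HH_mem 0 (c a1 * (↑(NN 0 a1 0 a3) : ℂ)⁻¹) 0 (c a3 * (↑(NN 0 a1 0 a3) : ℂ)⁻¹) 1 0 0 0 ?_ ?_ ?_ ?_ ?_, ?_, ?_, ?_, ?_⟩
      · try simp only [map_mul, map_add, map_sub, map_neg, map_inv₀, map_zero, map_one,
        Complex.conj_conj, Complex.conj_ofReal]
        linear_combination hn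
      · norm_num
      · norm_num
      · norm_num
      · rw [HH_det]
        try simp only [map_mul, map_add, map_sub, map_neg, map_inv₀, map_zero, map_one,
        Complex.conj_conj, Complex.conj_ofReal]
        linear_combination hn
      · simp [HH, Matrix.vecHead, Matrix.vecTail]
      · simp [HH, Matrix.vecHead, Matrix.vecTail]
      · rfl
      · rfl
  · have hS : (0:ℝ) < Complex.normSq a0 + Complex.normSq a1 + Complex.normSq a2
        + Complex.normSq a3 := by
      rcases not_and_or.mp hP with h | h <;>
      · have h' := Complex.normSq_pos.mpr h
        have := Complex.normSq_nonneg a0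
        have := Complex.normSq_nonneg a1
        have := Complex.normSq_nonneg a2
        have := Complex.normSq_nonneg a3
        linarith
    have hN2 : ((NN a0 a1 a2 a3 : ℝ) : ℂ) * ((NN a0 a1 a2 a3 : ℝ) : ℂ)
        = a0 * c a0 + a1 * c a1 + a2 * c a2 + a3 * c a3 := by
      rw [← Complex.ofReal_mul]
      simp only [NN, Real.mul_self_sqrt hS.le, Complex.mul_conj]
      push_cast
      ring
    have hN0 : ((NN a0 a1 a2 a3 : ℝ) : ℂ) ≠ 0 := by
      simp only [NN, ne_eq, Complex.ofReal_eq_zero]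
      positivity
    have hPc0 : a0 * c a0 + a2 * c a2 ≠ 0 := by
      have h2 : a0 * c a0 + a2 * c a2 = ((Complex.normSq a0 + Complex.normSq a2 : ℝ) : ℂ) := by
        push_cast [Complex.mul_conj]
        ring
      rw [h2]
      rcases not_and_or.mp hP with h | h <;>
      · have h' := Complex.normSq_pos.mpr h
        have := Complex.normSq_nonneg a0
        have := Complex.normSq_nonneg a2
        simp only [ne_eq, Complex.ofReal_eq_zero]
        intro hcon
        linarith
    have hswap : (c a0 * a0 + c a2 * a2)⁻¹ = (a0 * c a0 + a2 * c a2)⁻¹ := by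
      rw [show c a0 * a0 + c a2 * a2 = a0 * c a0 + a2 * c a2 from by ring]
    have hn : (a0 * c a0 + a1 * c a1 + a2 * c a2 + a3 * c a3) * ((↑(NN a0 a1 a2 a3) : ℂ)⁻¹ * (↑(NN a0 a1 a2 a3) : ℂ)⁻¹) = 1 := by
      rw [← hN2]
      field_simp
    have hm : (a0 * c a0 + a2 * c a2) * (a0 * c a0 + a2 * c a2)⁻¹ = 1 := mul_inv_cancel₀ hPc0
    refine ⟨HH (c a0 * (↑(NN a0 a1 a2 a3) : ℂ)⁻¹) (c a1 * (↑(NN a0 a1 a2 a3) : ℂ)⁻¹) (c a2 * (↑(NN a0 a1 a2 a3) : ℂ)⁻¹) (c a3 * (↑(NN a0 a1 a2 a3) : ℂ)⁻¹) ((-((c a0 * a1 + a2 * c a3) * a0 + (a2 * c a1 - c a0 * a3) * c a2)) * ((a0 * c a0 + a2 * c a2)⁻¹ * (↑(NN a0 a1 a2 a3) : ℂ)⁻¹)) (a0 * (↑(NN a0 a1 a2 a3) : ℂ)⁻¹) ((-((c a2 * a1 - a0 * c a3) * a0 - (a0 * c a1 + c a2 * a3) * c a2)) * ((a0 * c a0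 + a2 * c a2)⁻¹ * (↑(NN a0 a1 a2 a3) : ℂ)⁻¹)) (-(c a2) * (↑(NN a0 a1 a2 a3) : ℂ)⁻¹), HH_mem (c a0 * (↑(NN a0 a1 a2 a3) : ℂ)⁻¹) (c a1 * (↑(NN a0 a1 a2 a3) : ℂ)⁻¹) (c a2 * (↑(NN a0 a1 a2 a3) : ℂ)⁻¹) (c a3 * (↑(NN a0 a1 a2 a3) : ℂ)⁻¹) ((-((c a0 * a1 + a2 * c a3) * a0 + (a2 * c a1 - c a0 * a3) * c a2)) * ((a0 * c a0 + a2 * c a2)⁻¹ * (↑(NN a0 a1 a2 a3) : ℂ)⁻¹)) (a0 * (↑(NN a0 a1 a2 a3) : ℂ)⁻¹) ((-((c a2 * a1 - a0 * c a3) * a0 - (a0 * c a1 + c a2 * a3) * c a2)) * ((a0 * c a0 + a2 * c a2)⁻¹ * (↑(NN a0 a1 a2 a3) : ℂ)⁻¹)) (-(c a2) * (↑(NN a0 a1 a2 a3) : ℂ)⁻¹) ?_ ?_ ?_ ?_ ?_, ?_, ?_, ?_, ?_⟩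
    · try simp only [map_mul, map_add, map_sub, map_neg, map_inv₀, map_zero, map_one,
        Complex.conj_conj, Complex.conj_ofReal, hswap]
      linear_combination hn
    · try simp only [map_mul, map_add, map_sub, map_neg, map_inv₀, map_zero, map_one,
        Complex.conj_conj, Complex.conj_ofReal, hswap]
      linear_combination (a3 * (c a3) * ((↑(NN a0 a1 a2 a3) : ℂ)⁻¹)^2 + a2 * a3 * (c a2) * (c a3) * ((↑(NN a0 a1 a2 a3) : ℂ)⁻¹)^2 * ((a0 * c a0 + a2 * c a2)⁻¹) + a1 * (c a1) * ((↑(NN a0 a1 a2 a3) : ℂ)⁻¹)^2 + a1 * a2 * (c a1) * (c a2) * ((↑(NN a0 a1 a2 a3) : ℂ)⁻¹)^2 * ((a0 * c a0 + a2 * c a2)⁻¹) + a0 * a3 * (c a0) * (c a3) * ((↑(NN a0 a1 a2 a3) : ℂ)⁻¹)^2 * ((a0 * c a0 + a2 * c a2)⁻¹) + a0 * a1 * (c a0) * (c a1) * ((↑(NN a0 a1 a2 a3) : ℂ)⁻¹)^2 * ((a0 * c a0 + a2 * c a2)⁻¹)) * hm + hn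
    · try simp only [map_mul, map_add, map_sub, map_neg, map_inv₀, map_zero, map_one,
        Complex.conj_conj, Complex.conj_ofReal, hswap]
      linear_combination (a3 * (c a2) * ((↑(NN a0 a1 a2 a3) : ℂ)⁻¹)^2 - a0 * a1 * ((↑(NN a0 a1 a2 a3) : ℂ)⁻¹)^2) * hm
    · try simp only [map_mul, map_add, map_sub, map_neg, map_inv₀, map_zero, map_one,
        Complex.conj_conj, Complex.conj_ofReal, hswap]
      linear_combination (a3 * (c a0) * ((↑(NN a0 a1 a2 a3) : ℂ)⁻¹)^2 + a1 * a2 * ((↑(NN a0 a1 a2 a3) : ℂ)⁻¹)^2) * hm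
    · rw [HH_det]
      try simp only [map_mul, map_add, map_sub, map_neg, map_inv₀, map_zero, map_one,
        Complex.conj_conj, Complex.conj_ofReal, hswap]
      linear_combination (a3^2 * (c a3)^2 * ((↑(NN a0 a1 a2 a3) : ℂ)⁻¹)^4 + 2 * a2 * a3 * (c a2) * (c a3) * ((↑(NN a0 a1 a2 a3) : ℂ)⁻¹)^4 + a2 * a3^2 * (c a2) * (c a3)^2 * ((↑(NN a0 a1 a2 a3) : ℂ)⁻¹)^4 * ((a0 * c a0 + a2 * c a2)⁻¹) + 2 * a1 * a3 * (c a1) * (c a3) * ((↑(NN a0 a1 a2 a3) : ℂ)⁻¹)^4 + 2 * a1 * a2 * (c a1) * (c a2) * ((↑(NN a0 a1 a2 a3) : ℂ)⁻¹)^4 + 2 * a1 * a2 * a3 * (c a1) * (c a2) * (c a3) * ((↑(NN a0 a1 a2 a3) : ℂ)⁻¹)^4 * ((a0 * c a0 + a2 * c a2)⁻¹) + a1^2 * (c a1)^2 * ((↑(NN a0 a1 a2 a3) : ℂ)⁻¹)^4 + a1^2 * a2 * (c a1)^2 * (c a2) * ((↑(NN a0 a1 a2 a3) : ℂ)⁻¹)^4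 * ((a0 * c a0 + a2 * c a2)⁻¹) + 2 * a0 * a3 * (c a0) * (c a3) * ((↑(NN a0 a1 a2 a3) : ℂ)⁻¹)^4 + a0 * a3^2 * (c a0) * (c a3)^2 * ((↑(NN a0 a1 a2 a3) : ℂ)⁻¹)^4 * ((a0 * c a0 + a2 * c a2)⁻¹) + 2 * a0 * a1 * (c a0) * (c a1) * ((↑(NN a0 a1 a2 a3) : ℂ)⁻¹)^4 + 2 * a0 * a1 * a3 * (c a0) * (c a1) * (c a3) * ((↑(NN a0 a1 a2 a3) : ℂ)⁻¹)^4 * ((a0 * c a0 + a2 * c a2)⁻¹) + a0 * a1^2 * (c a0) * (c a1)^2 * ((↑(NN a0 a1 a2 a3) : ℂ)⁻¹)^4 * ((a0 * c a0 + a2 * c a2)⁻¹)) * hm + (1 + a3 * (c a3) * ((↑(NN a0 a1 a2 a3) : ℂ)⁻¹)^2 + a2 * (c a2) * ((↑(NN a0 a1 a2 a3) : ℂ)⁻¹)^2 + a1 * (c a1) * ((↑(NN a0 a1 a2 a3) : ℂ)⁻¹)^2 + a0 * (c a0) * ((↑(NN a0 a1 a2 a3) : ℂ)⁻¹)^2)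 * hn
    · simp [HH, Matrix.vecHead, Matrix.vecTail]
      try simp only [map_mul, map_add, map_sub, map_neg, map_inv₀, map_zero, map_one,
        Complex.conj_conj, Complex.conj_ofReal, hswap]
      linear_combination (a3 * (c a2) * ((↑(NN a0 a1 a2 a3) : ℂ)⁻¹) - a0 * a1 * ((↑(NN a0 a1 a2 a3) : ℂ)⁻¹)) * hm
    · simp [HH, Matrix.vecHead, Matrix.vecTail]
      try simp only [map_mul, map_add, map_sub, map_neg, map_inv₀, map_zero, map_one,
        Complex.conj_conj, Complex.conj_ofReal, hswap]
      linear_combination (-(a3 * (c a0) * ((↑(NN a0 a1 a2 a3) : ℂ)⁻¹)) - a1 * a2 * ((↑(NN a0 a1 a2 a3) : ℂ)⁻¹)) * hm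
    · rfl
    · rfl


theorem stmt5 (A : Matrix (Fin 5) (Fin 5) ℂ) (hA : A ∈ SU5) :
    ∃ h ∈ Sp2,
      ∑ ℓ : Fin 5, (‖(A * h) ℓ 1‖ ^ 2 + ‖(A * h) ℓ 3‖ ^ 2) *
        (((![1, 1, 1, -1, -3] : Fin 5 → ℤ) ℓ : ℤ) : ℝ) ≥ 0 := by
  obtain ⟨h, hmem, hz1, hz3, h41, h43⟩ := exists_h (A 4 0) (A 4 1) (A 4 2) (A 4 3)
  refine ⟨h, hmem, key A h hA hmem ?_ ?_⟩
  · rw [Matrix.mul_apply, Fin.sum_univ_five, h41]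
    linear_combination hz1
  · rw [Matrix.mul_apply, Fin.sum_univ_five, h43]
    linear_combination hz3
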